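/- With M(λ) encoded by exponent families (b_k^i) as above and i fixed, if after the signature cancellation the rightmost surviving 1 lies in the component X_{i+1}(-m_0), then replacing b_{i+1}^{m_0} by b_{i+1}^{m_0} − 1 and b_i^{m_0} by b_i^{m_0} + 1 yields a family again satisfying all the defining conditions of M(λ); if no 1 survives, the operator ẽ_i sends the monomial to 0. Hence M(λ) ∪ {0} is closed under ẽ_i. -/

import Mathlib

open Finset List

/-- Row sums `l_i + ⋯ + l_n` (zero outside `1 ≤ i ≤ n`). -/
def rowLen (n : ℕ) (l : ℕ → ℕ) (i : ℕ) : ℕ :=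
  if 1 ≤ i ∧ i ≤ n then ∑ k ∈ Finset.Icc i n, l k else 0

/-- The defining conditions of `M(λ)` on an exponent family `(b_k^i)`
(encoded `b k i`): support in `1 ≤ i ≤ n`, `i ≤ k ≤ n+1`; row sums
`∑_{j=i}^{n+1} b_j^i = ∑_{k=i}^n l_k`; and partial-sum dominance
`∑_{k=0}^{j} b_{i+k}^i ≥ ∑_{k=0}^{j} b_{i+1+k}^{i+1}` for `0 ≤ j ≤ n-1`,
`1 ≤ i ≤ n - max 1 j`. -/
def MlaCond (n : ℕ) (l : ℕ → ℕ) (b : ℕ → ℕ → ℕ) : Prop :=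
  (∀ k i, ¬(1 ≤ i ∧ i ≤ n ∧ i ≤ k ∧ k ≤ n + 1) → b k i = 0) ∧
  (∀ i, 1 ≤ i → i ≤ n → ∑ j ∈ Finset.Icc i (n + 1), b j i = rowLen n l i) ∧
  (∀ j, j ≤ n - 1 → ∀ i, 1 ≤ i → i ≤ n - max 1 j →
    ∑ k ∈ Finset.range (j + 1), b (i + 1 + k) (i + 1)
      ≤ ∑ k ∈ Finset.range (j + 1), b (i + k) i)

/-- The tagged `i`-signature word of `(b_k^i)`: reading `m = 1, 2, …, n`
(components `X_{n+1}(-m), …, X_m(-m)`, so within each `m` the `1`s from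
`X_{i+1}(-m)` precede the `0`s from `X_i(-m)`), write `b_{i+1}^m` many `1`s
(`true`) and `b_i^m` many `0`s (`false`), each tagged with its component `m`. -/
def sigWord (n i : ℕ) (b : ℕ → ℕ → ℕ) : List (Bool × ℕ) :=
  (List.range n).flatMap fun m' =>
    List.replicate (b (i + 1) (m' + 1)) (true, m' + 1) ++
    List.replicate (b i (m' + 1)) (false, m' + 1)

/-- One cancellation step on tagged words: delete an adjacent `(0,1)`-pair. -/
def SigStep (u v : List (Bool × ℕ)) : Prop :=
  ∃ (xs ys : List (Bool × ℕ)) (m₁ m₂ : ℕ),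
    u = xs ++ (false, m₁) :: (true, m₂) :: ys ∧ v = xs ++ ys

/-- A tagged word is reduced when no cancellation is possible. -/
def SigReduced (u : List (Bool × ℕ)) : Prop := ∀ v, ¬ SigStep u v

namespace SigAux

def push (s : List (Bool × ℕ)) (c : Bool × ℕ) : List (Bool × ℕ) :=
  match s with
  | (false, _) :: s' => if c.1 then s' else c :: s
  | _ => c :: s

def normAux (s u : List (Bool × ℕ)) : List (Bool × ℕ) := u.foldl push s

lemma normAux_append (s u v : List (Bool × ℕ)) :
    normAux s (u ++ v) = normAux (normAux s u) v := List.foldl_append ..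

lemma normAux_cons (s : List (Bool × ℕ)) (x : Bool × ℕ) (u : List (Bool × ℕ)) :
    normAux s (x :: u) = normAux (push s x) u := rfl

lemma push_false (s : List (Bool × ℕ)) (m : ℕ) :
    push s (false, m) = (false, m) :: s := by
  rcases s with _ | ⟨⟨b, m'⟩, s'⟩
  · rfl
  · cases b <;> rfl

lemma push_true_false (s : List (Bool × ℕ)) (m m' : ℕ) :
    push ((false, m') :: s) (true, m) = s := rfl

lemma push_true_of (s : List (Bool × ℕ)) (c : Bool × ℕ) (hc : c.1 = true)
    (hs : ∀ x ∈ s, x.1 = true) : push s c = c :: s := by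
  rcases s with _ | ⟨⟨b, m'⟩, s'⟩
  · rfl
  · have : b = true := hs _ List.mem_cons_self
    subst this; rfl

lemma normAux_falses (c : List (Bool × ℕ)) (hc : ∀ x ∈ c, x.1 = false) :
    ∀ s, normAux s c = c.reverse ++ s := by
  induction c with
  | nil => intro s; rfl
  | cons x c' ih =>
    intro s
    have hx : x.1 = false := hc _ List.mem_cons_self
    have : push s x = x :: s := by
      rcases x with ⟨b, m⟩; cases b
      · exact push_false s m
      · simp at hx
    show normAux (push s x) c' = _
    rw [this, ih (fun y hy => hc _ (by simp [hy]))]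
    simp

lemma normAux_trues (a : List (Bool × ℕ)) (ha : ∀ x ∈ a, x.1 = true) :
    ∀ s, (∀ x ∈ s, x.1 = true) → normAux s a = a.reverse ++ s := by
  induction a with
  | nil => intro s _; rfl
  | cons x a' ih =>
    intro s hs
    have hx : x.1 = true := ha _ List.mem_cons_self
    show normAux (push s x) a' = _
    rw [push_true_of s x hx hs, ih (fun y hy => ha _ (by simp [hy]))]
    · simp
    · intro y hy
      rcases List.mem_cons.1 hy with h | h
      · subst h; exact hx
      · exact hs _ h

def norm (u : List (Bool × ℕ)) : List (Bool × ℕ) := (normAux [] u).reverse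

lemma norm_step {u v : List (Bool × ℕ)} (h : SigStep u v) : norm u = norm v := by
  obtain ⟨xs, ys, m₁, m₂, hu, hv⟩ := h
  subst hu; subst hv
  unfold norm
  rw [normAux_append, normAux_append]
  congr 1
  show normAux (push (push _ (false, m₁)) (true, m₂)) ys = _
  rw [push_false, push_true_false]

lemma norm_reachable {u v : List (Bool × ℕ)} (h : Relation.ReflTransGen SigStep u v) :
    norm u = norm v := by
  induction h with
  | refl => rfl
  | tail _ hstep ih => exact ih.trans (norm_step hstep)

lemma reduced_shape {u : List (Bool × ℕ)} (h : SigReduced u) :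
    ∃ a c, u = a ++ c ∧ (∀ x ∈ a, x.1 = true) ∧ (∀ x ∈ c, x.1 = false) := by
  induction u with
  | nil => exact ⟨[], [], rfl, by simp, by simp⟩
  | cons x v ih =>
    have hv : SigReduced v := by
      intro w hw
      obtain ⟨xs, ys, m₁, m₂, h1, h2⟩ := hw
      exact h (x :: w) ⟨x :: xs, ys, m₁, m₂, by simp [h1], by simp [h2]⟩
    obtain ⟨a, c, huv, ha, hc⟩ := ih hv
    rcases x with ⟨bb, m⟩
    cases bb
    · rcases a with _ | ⟨y, a'⟩
      · refine ⟨[], (false, m) :: c, by simp [huv], by simp, ?_⟩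
        intro z hz
        rcases List.mem_cons.1 hz with h' | h'
        · subst h'; rfl
        · exact hc _ h'
      · exfalso
        have hy : y.1 = true := ha _ List.mem_cons_self
        rcases y with ⟨by', my⟩
        simp at hy; subst hy
        exact h (a' ++ c) ⟨[], a' ++ c, m, my, by simp [huv], rfl⟩
    · exact ⟨(true, m) :: a, c, by simp [huv], by
        intro z hz
        rcases List.mem_cons.1 hz with h' | h'
        · subst h'; rfl
        · exact ha _ h', hc⟩

lemma norm_reduced {u : List (Bool × ℕ)} (h : SigReduced u) : norm u = u := by
  obtain ⟨a, c, huv, ha, hc⟩ := reduced_shape h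
  subst huv
  unfold norm
  rw [normAux_append, normAux_trues a ha [] (by simp), normAux_falses c hc]
  simp

lemma normAux_trues_le (m o : ℕ) :
    ∀ (f t : List (Bool × ℕ)), (∀ x ∈ f, x.1 = false) → o ≤ f.length →
      normAux (f ++ t) (List.replicate o (true, m)) = f.drop o ++ t := by
  induction o with
  | zero => intro f t _ _; simp [normAux]
  | succ o ih =>
    intro f t hf hlen
    rcases f with _ | ⟨⟨bb, mf⟩, f'⟩
    · simp at hlen
    · have : bb = false := hf _ List.mem_cons_self
      subst this
      rw [List.replicate_succ, normAux_cons]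
      have : push (((false, mf) :: f') ++ t) (true, m) = f' ++ t := by
        simpa using push_true_false (f' ++ t) m mf
      rw [this, ih f' t (fun x hx => hf _ (List.mem_cons_of_mem _ hx)) (by simpa using hlen)]
      simp

lemma normAux_trues_gt (m o : ℕ) :
    ∀ (f t : List (Bool × ℕ)), (∀ x ∈ f, x.1 = false) → (∀ x ∈ t, x.1 = true) →
      f.length < o →
      normAux (f ++ t) (List.replicate o (true, m))
        = List.replicate (o - f.length) (true, m) ++ t := by
  induction o with
  | zero => intro f t _ _ h; omega
  | succ o ih =>
    intro f t hf ht hlen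
    rcases f with _ | ⟨⟨bb, mf⟩, f'⟩
    · simp only [List.nil_append, List.length_nil, Nat.sub_zero]
      rw [normAux_trues _ (by simp +contextual [List.eq_of_mem_replicate]) _ ht]
      rw [List.reverse_replicate]
    · have : bb = false := hf _ List.mem_cons_self
      subst this
      rw [List.replicate_succ, normAux_cons]
      have hp : push (((false, mf) :: f') ++ t) (true, m) = f' ++ t := by
        simpa using push_true_false (f' ++ t) m mf
      rw [hp, ih f' t (fun x hx => hf _ (List.mem_cons_of_mem _ hx)) ht (by simpa using hlen)]
      simp

set_option maxHeartbeats 1600000 in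
lemma inv_main (i : ℕ) (b : ℕ → ℕ → ℕ) (hz0 : b i 0 = 0) :
    ∀ m, ∃ f t, normAux [] ((List.range m).flatMap fun m' =>
        List.replicate (b (i+1) (m'+1)) (true, m'+1) ++
        List.replicate (b i (m'+1)) (false, m'+1))
      = f ++ t ∧ (∀ x ∈ f, x.1 = false) ∧ (∀ x ∈ t, x.1 = true) ∧ b i m ≤ f.length ∧
      (∀ mh, t.head? = some (true, mh) → 1 ≤ mh ∧ mh ≤ m ∧ b i (mh - 1) < b (i+1) mh) := by
  intro m
  induction m with
  | zero =>
    refine ⟨[], [], by simp [normAux], by simp, by simp, by simp [hz0], by simp⟩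
  | succ m ih =>
    obtain ⟨f, t, heq, hf, ht, hlen, hhead⟩ := ih
    rw [List.range_succ, List.flatMap_append, normAux_append, heq]
    simp only [List.flatMap_cons, List.flatMap_nil, List.append_nil]
    rw [normAux_append]
    by_cases hc : b (i+1) (m+1) ≤ f.length
    · rw [normAux_trues_le _ _ f t hf hc,
        normAux_falses _ (by simp +contextual [List.eq_of_mem_replicate]) _]
      rw [List.reverse_replicate]
      refine ⟨List.replicate (b i (m+1)) (false, m+1) ++ f.drop (b (i+1) (m+1)), t,
        by rw [List.append_assoc], ?_, ht, by simp, ?_⟩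
      · intro x hx
        rcases List.mem_append.1 hx with h | h
        · exact (List.eq_of_mem_replicate h) ▸ rfl
        · exact hf _ (List.mem_of_mem_drop h)
      · intro mh hmh
        obtain ⟨h1, h2, h3⟩ := hhead mh hmh
        exact ⟨h1, h2.trans (Nat.le_succ m), h3⟩
    · push_neg at hc
      rw [normAux_trues_gt _ _ f t hf ht hc]
      rw [normAux_falses (List.replicate (b i (m+1)) ((false : Bool), m+1))
          (by simp +contextual [List.eq_of_mem_replicate]) _]
      rw [List.reverse_replicate]
      refine ⟨List.replicate (b i (m+1)) (false, m+1),
        List.replicate (b (i+1) (m+1) - f.length) (true, m+1) ++ t, rfl,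
        by simp +contextual [List.eq_of_mem_replicate], ?_, by simp, ?_⟩
      · intro x hx
        rcases List.mem_append.1 hx with h | h
        · exact (List.eq_of_mem_replicate h) ▸ rfl
        · exact ht _ h
      · intro mh hmh
        have hk : 1 ≤ b (i+1) (m+1) - f.length := by omega
        have : (List.replicate (b (i+1) (m+1) - f.length) ((true : Bool), m+1) ++ t).head?
            = some (true, m+1) := by
          rcases Nat.exists_eq_add_of_le hk with ⟨k, hk'⟩
          rw [hk', Nat.add_comm, List.replicate_succ]
          simp
        rw [this] at hmh
        have hmh' : m + 1 = mh := by simpa using hmh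
        subst hmh'
        exact ⟨by omega, le_refl _, by simpa using lt_of_le_of_lt hlen hc⟩

lemma last_true : ∀ (A : List (Bool × ℕ)) (p C q : List (Bool × ℕ)) (m₀ : ℕ),
    (∀ x ∈ A, x.1 = true) → (∀ x ∈ C, x.1 = false) → (∀ x ∈ q, x.1 = false) →
    A ++ C = p ++ (true, m₀) :: q → A.getLast? = some (true, m₀) := by
  intro A
  induction A with
  | nil =>
    intro p C q m₀ _ hC hq h
    exfalso
    have : ((true : Bool), m₀) ∈ C := by
      rw [List.nil_append] at h; rw [h]; simp
    simpa using hC _ this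
  | cons a A' ih =>
    intro p C q m₀ hA hC hq h
    rcases p with _ | ⟨p₀, p'⟩
    · simp only [List.cons_append, List.nil_append] at h
      obtain ⟨ha, htail⟩ := List.cons.injEq .. ▸ h
      have hA' : A' = [] := by
        rcases A' with _ | ⟨x, A''⟩
        · rfl
        · exfalso
          have hx : x.1 = true := hA _ (by simp)
          have : x ∈ q := by
            rw [← htail]; simp
          rw [hq _ this] at hx; simp at hx
      subst hA'; subst ha; rfl
    · simp only [List.cons_append] at h
      obtain ⟨ha, htail⟩ := List.cons.injEq .. ▸ h
      have := ih p' C q m₀ (fun x hx => hA _ (List.mem_cons_of_mem _ hx)) hC hq htail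
      rcases A' with _ | ⟨x, A''⟩
      · simp at this
      · rw [List.getLast?_cons_cons]; exact this

lemma sig_key (n i : ℕ) (b : ℕ → ℕ → ℕ) (hz0 : b i 0 = 0)
    (r : List (Bool × ℕ)) (m₀ : ℕ)
    (hr : Relation.ReflTransGen SigStep (sigWord n i b) r)
    (hred : SigReduced r)
    (hm₀ : ∃ p q : List (Bool × ℕ),
      r = p ++ (true, m₀) :: q ∧ ∀ x ∈ q, x.1 = false) :
    1 ≤ m₀ ∧ m₀ ≤ n ∧ b i (m₀ - 1) < b (i + 1) m₀ := by
  obtain ⟨p, q, hrpq, hq⟩ := hm₀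
  have hnr : norm (sigWord n i b) = r :=
    (norm_reachable hr).trans (norm_reduced hred)
  obtain ⟨f, t, heq, hf, ht, hlen, hhead⟩ := inv_main i b hz0 n
  have hw : norm (sigWord n i b) = t.reverse ++ f.reverse := by
    unfold norm sigWord
    rw [heq]
    simp
  have hsplit : t.reverse ++ f.reverse = p ++ (true, m₀) :: q := by
    rw [← hw, hnr, hrpq]
  have hlast := last_true t.reverse p f.reverse q m₀
    (by intro x hx; exact ht _ (List.mem_reverse.1 hx))
    (by intro x hx; exact hf _ (List.mem_reverse.1 hx)) hq hsplit
  rw [List.getLast?_reverse] at hlast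
  exact hhead m₀ hlast

end SigAux


/-- Closure of `M(λ)` under `ẽ_i`: if, after cancelling all `(0,1)`-pairs in
the `i`-signature word of `b ∈ M(λ)`, the rightmost surviving `1` is tagged
with component `m₀` (i.e. comes from `X_{i+1}(-m₀)`), then the family obtained
by replacing `b_{i+1}^{m₀}` with `b_{i+1}^{m₀} − 1` and `b_i^{m₀}` with
`b_i^{m₀} + 1` again satisfies all the defining conditions of `M(λ)`.
(If no `1` survives, `ẽ_i` sends the monomial to `0` by definition; hence
`M(λ) ∪ {0}` is closed under `ẽ_i`.) -/
theorem Mla_closed_e (n : ℕ) (hn : 1 ≤ n) (l : ℕ → ℕ) (b : ℕ → ℕ → ℕ)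
    (i : ℕ) (hi1 : 1 ≤ i) (hi2 : i ≤ n) (hb : MlaCond n l b)
    (r : List (Bool × ℕ)) (m₀ : ℕ)
    (hr : Relation.ReflTransGen SigStep (sigWord n i b) r)
    (hred : SigReduced r)
    (hm₀ : ∃ p q : List (Bool × ℕ),
      r = p ++ (true, m₀) :: q ∧ ∀ x ∈ q, x.1 = false) :
    MlaCond n l (fun k m =>
      if k = i + 1 ∧ m = m₀ then b (i + 1) m₀ - 1
      else if k = i ∧ m = m₀ then b i m₀ + 1
      else b k m) := by
  have hz0 : b i 0 = 0 := hb.1 i 0 (by omega)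
  obtain ⟨hm1, hm2, hkey⟩ := SigAux.sig_key n i b hz0 r m₀ hr hred hm₀
  clear hr hred hm₀ hz0
  obtain ⟨hsupp, hrow, hdom⟩ := hb
  have ho1 : 1 ≤ b (i + 1) m₀ := by omega
  have hm₀i1 : m₀ ≤ i + 1 := by
    by_contra hcon
    have := hsupp (i + 1) m₀ (by omega)
    omega
  have hm₀i : m₀ ≤ i := by
    rcases Nat.lt_or_ge m₀ (i + 1) with h | h
    · omega
    · exfalso
      have hmi : m₀ = i + 1 := by omega
      have hd := hdom 0 (by omega) i hi1 (by simp; omega)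
      simp at hd
      have e : m₀ - 1 = i := by omega
      rw [e, hmi] at hkey
      omega
  -- strict dominance at the crucial spot
  have hstrict : 2 ≤ m₀ →
      (∑ k ∈ Finset.range (i - m₀ + 1), b (m₀ + k) m₀) + 1
        ≤ ∑ k ∈ Finset.range (i - m₀ + 1), b (m₀ - 1 + k) (m₀ - 1) := by
    intro h2
    have hmax : max 1 (i - m₀ + 1) = i - m₀ + 1 := max_eq_right (by omega)
    have hd := hdom (i - m₀ + 1) (by omega) (m₀ - 1) (by omega) (by rw [hmax]; omega)
    have e0 : m₀ - 1 + 1 = m₀ := by omega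
    rw [e0] at hd
    rw [Finset.sum_range_succ (fun k => b (m₀ + k) m₀) (i - m₀ + 1),
        Finset.sum_range_succ (fun k => b (m₀ - 1 + k) (m₀ - 1)) (i - m₀ + 1)] at hd
    have e1 : m₀ + (i - m₀ + 1) = i + 1 := by omega
    have e2 : m₀ - 1 + (i - m₀ + 1) = i := by omega
    rw [e1, e2] at hd
    omega
  -- row-sum helper lemmas about the modified family
  set b' : ℕ → ℕ → ℕ := fun k m =>
      if k = i + 1 ∧ m = m₀ then b (i + 1) m₀ - 1
      else if k = i ∧ m = m₀ then b i m₀ + 1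
      else b k m with hb'
  have hb'ne : ∀ k m, m ≠ m₀ → b' k m = b k m := by
    intro k m hm
    rw [hb']
    simp [hm]
  have hb'i1 : b' (i+1) m₀ = b (i+1) m₀ - 1 := by rw [hb']; simp
  have hb'i : b' i m₀ = b i m₀ + 1 := by
    rw [hb']; simp
  have hb'other : ∀ k, k ≠ i → k ≠ i + 1 → b' k m₀ = b k m₀ := by
    intro k h1 h2
    rw [hb']; simp [h1, h2]
  -- sums over row m₀ starting at m₀
  have hsmall : ∀ t, t ≤ i - m₀ →
      ∑ k ∈ Finset.range t, b' (m₀ + k) m₀ = ∑ k ∈ Finset.range t, b (m₀ + k) m₀ := by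
    intro t ht
    refine Finset.sum_congr rfl fun k hk => ?_
    rw [Finset.mem_range] at hk
    exact hb'other _ (by omega) (by omega)
  have heqzone : ∑ k ∈ Finset.range (i - m₀ + 1), b' (m₀ + k) m₀
      = (∑ k ∈ Finset.range (i - m₀ + 1), b (m₀ + k) m₀) + 1 := by
    rw [Finset.sum_range_succ, Finset.sum_range_succ, hsmall (i - m₀) le_rfl]
    have e : m₀ + (i - m₀) = i := by omega
    rw [e, hb'i]
    omega
  have hbig : ∀ t, i - m₀ + 1 < t →
      ∑ k ∈ Finset.range t, b' (m₀ + k) m₀ = ∑ k ∈ Finset.range t, b (m₀ + k) m₀ := by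
    intro t ht
    have hk2 : i - m₀ + 1 ∈ Finset.range t := by rw [Finset.mem_range]; omega
    have hk1 : i - m₀ ∈ (Finset.range t).erase (i - m₀ + 1) := by
      rw [Finset.mem_erase, Finset.mem_range]; omega
    rw [← Finset.add_sum_erase _ (fun k => b' (m₀ + k) m₀) hk2,
        ← Finset.add_sum_erase _ (fun k => b (m₀ + k) m₀) hk2,
        ← Finset.add_sum_erase _ (fun k => b' (m₀ + k) m₀) hk1,
        ← Finset.add_sum_erase _ (fun k => b (m₀ + k) m₀) hk1]
    have e1 : m₀ + (i - m₀ + 1) = i + 1 := by omega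
    have e2 : m₀ + (i - m₀) = i := by omega
    simp only [e1, e2, hb'i1, hb'i]
    have hrest : ∑ k ∈ ((Finset.range t).erase (i - m₀ + 1)).erase (i - m₀),
          b' (m₀ + k) m₀
        = ∑ k ∈ ((Finset.range t).erase (i - m₀ + 1)).erase (i - m₀),
          b (m₀ + k) m₀ := by
      refine Finset.sum_congr rfl fun k hk => ?_
      rw [Finset.mem_erase, Finset.mem_erase] at hk
      exact hb'other _ (by omega) (by omega)
    omega
  refine ⟨?_, ?_, ?_⟩
  · -- support
    intro k m hk
    show b' k m = 0
    rw [hb']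
    simp only
    split_ifs with h1 h2
    · exact absurd ⟨hm1, hm2, by omega, by omega⟩ (h1.2 ▸ h1.1 ▸ hk)
    · exact absurd ⟨hm1, hm2, by omega, by omega⟩ (h2.2 ▸ h2.1 ▸ hk)
    · exact hsupp k m hk
  · -- row sums
    intro m h1 h2
    show ∑ j ∈ Finset.Icc m (n + 1), b' j m = rowLen n l m
    by_cases hm : m = m₀
    · subst hm
      have hi1m : i + 1 ∈ Finset.Icc m (n + 1) := by
        rw [Finset.mem_Icc]; omega
      have him : i ∈ (Finset.Icc m (n + 1)).erase (i + 1) := by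
        rw [Finset.mem_erase, Finset.mem_Icc]
        exact ⟨by omega, by omega, by omega⟩
      rw [← Finset.add_sum_erase _ (fun j => b' j m) hi1m,
          ← Finset.add_sum_erase _ (fun j => b' j m) him] at *
      rw [← hrow m h1 h2,
          ← Finset.add_sum_erase _ (fun j => b j m) hi1m,
          ← Finset.add_sum_erase _ (fun j => b j m) him]
      have hrest : ∑ j ∈ ((Finset.Icc m (n + 1)).erase (i + 1)).erase i, b' j m
          = ∑ j ∈ ((Finset.Icc m (n + 1)).erase (i + 1)).erase i, b j m := by
        refine Finset.sum_congr rfl fun j hj => ?_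
        rw [Finset.mem_erase, Finset.mem_erase] at hj
        exact hb'other _ hj.1 hj.2.1
      simp only [hb'i1, hb'i]
      omega
    · rw [Finset.sum_congr rfl fun j _ => hb'ne j m hm]
      exact hrow m h1 h2
  · -- dominance
    intro j hj i' h1 h2
    show ∑ k ∈ Finset.range (j + 1), b' (i' + 1 + k) (i' + 1)
        ≤ ∑ k ∈ Finset.range (j + 1), b' (i' + k) i'
    by_cases hA : i' + 1 = m₀
    · have h2m : 2 ≤ m₀ := by omega
      have hRHS : ∑ k ∈ Finset.range (j + 1), b' (i' + k) i'
          = ∑ k ∈ Finset.range (j + 1), b (i' + k) i' :=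
        Finset.sum_congr rfl fun k _ => hb'ne _ _ (by omega)
      rw [hRHS, hA]
      rcases Nat.lt_trichotomy (j + 1) (i - m₀ + 1) with hz | hz | hz
      · rw [hsmall (j + 1) (by omega)]
        have := hdom j hj i' h1 h2
        rw [hA] at this
        exact this
      · rw [hz, heqzone]
        have := hstrict h2m
        have e : m₀ - 1 = i' := by omega
        rw [e] at this
        exact this
      · rw [hbig (j + 1) hz]
        have := hdom j hj i' h1 h2
        rw [hA] at this
        exact this
    · by_cases hB : i' = m₀
      · have hLHS : ∑ k ∈ Finset.range (j + 1), b' (i' + 1 + k) (i' + 1)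
            = ∑ k ∈ Finset.range (j + 1), b (i' + 1 + k) (i' + 1) :=
          Finset.sum_congr rfl fun k _ => hb'ne _ _ hA
        rw [hLHS, hB]
        have hd := hdom j hj i' h1 h2
        rw [hB] at hd
        rcases Nat.lt_trichotomy (j + 1) (i - m₀ + 1) with hz | hz | hz
        · rw [hsmall (j + 1) (by omega)]; exact hd
        · rw [hz] at hd ⊢; rw [heqzone]; omega
        · rw [hbig (j + 1) hz]; exact hd
      · rw [Finset.sum_congr rfl fun k _ => hb'ne _ _ hA,
            Finset.sum_congr rfl fun k _ => hb'ne _ _ hB]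
        exact hdom j hj i' h1 h2
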